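/- arXiv:1312.1166 — 3 statements merged into one kernel-verified Lean document; each statement's English description precedes it below -/
import Mathlib

section
/- Let a, b be integers and m a positive integer with gcd(b, m) = 1. Then the set {a^n + b·n : n = 1, ..., m²} contains a complete system of residues modulo m; that is, for every integer r there exists n with 1 ≤ n ≤ m² such that a^n + b·n ≡ r (mod m). -/
lemma period_exists {m : ℕ} (hm : 2 ≤ m) (A : ZMod m) :
    ∃ i t : ℕ, 0 < t ∧ t < m ∧ i + t ≤ m ∧ ∀ n, i ≤ n → A ^ (n + t) = A ^ n := by
  haveI : NeZero m := ⟨by omega⟩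
  by_cases hA : IsUnit A
  · refine ⟨0, m.totient, Nat.totient_pos.mpr (by omega), Nat.totient_lt m (by omega),
      by simpa using Nat.totient_le m, ?_⟩
    intro n _
    have h1 : A ^ m.totient = 1 := by
      have h := ZMod.pow_totient hA.unit
      conv_lhs => rw [← hA.unit_spec]
      rw [← Units.val_pow_eq_pow_val, h, Units.val_one]
    rw [pow_add, h1, mul_one]
  · have hninj : ¬ Function.Injective (fun k : Fin m => A ^ ((k : ℕ) + 1)) := by
      intro hinj
      have hbij : Function.Bijective (fun k : Fin m => A ^ ((k : ℕ) + 1)) :=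
        (Fintype.bijective_iff_injective_and_card _).mpr ⟨hinj, by simp [ZMod.card]⟩
      obtain ⟨k, hk⟩ := hbij.surjective 1
      exact hA (IsUnit.of_mul_eq_one (a := A) (A ^ (k : ℕ)) (by rw [← pow_succ']; exact hk))
    obtain ⟨x, y, hxy, hne⟩ := Function.not_injective_iff.mp hninj
    have hvne : (x : ℕ) ≠ (y : ℕ) := fun h => hne (Fin.ext h)
    -- make k < l with A^(k+1) = A^(l+1)
    obtain ⟨k, l, hkl, hpow⟩ : ∃ k l : ℕ, k < l ∧ l < m ∧ A ^ (k + 1) = A ^ (l + 1) := by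
      rcases Nat.lt_or_ge (x : ℕ) (y : ℕ) with h | h
      · exact ⟨x, y, h, y.isLt, hxy⟩
      · exact ⟨y, x, by omega, x.isLt, hxy.symm⟩
    obtain ⟨hlm, hpow⟩ := hpow
    refine ⟨k + 1, l - k, by omega, by omega, by omega, ?_⟩
    intro n hn
    have h1 : n + (l - k) = (n - (k + 1)) + (l + 1) := by omega
    rw [h1, pow_add, ← hpow, ← pow_add]
    congr 1
    omega

lemma key (a b r : ℤ) : ∀ m : ℕ, 0 < m → Int.gcd b m = 1 → ∀ N : ℕ,
    ∃ n : ℕ, N < n ∧ n ≤ N + m ^ 2 ∧ ((a ^ n + b * n : ℤ) : ZMod m) = (r : ZMod m) := by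
  intro m
  induction m using Nat.strong_induction_on with
  | _ m IH =>
  intro hm hb N
  by_cases hm1 : m = 1
  · subst hm1
    exact ⟨N + 1, by omega, by omega, Subsingleton.elim _ _⟩
  have hm2 : 2 ≤ m := by omega
  obtain ⟨i, t, ht, htm, hitm, hper⟩ := period_exists hm2 (a : ZMod m)
  set g := Nat.gcd t m with hgdef
  have hg : 0 < g := Nat.gcd_pos_of_pos_left m ht
  have hgt : g ≤ t := Nat.gcd_le_left m ht
  have hgm : g < m := lt_of_le_of_lt hgt htm
  obtain ⟨t', ht'⟩ : g ∣ t := Nat.gcd_dvd_left t m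
  obtain ⟨m', hm'⟩ : g ∣ m := Nat.gcd_dvd_right t m
  have hm'pos : 0 < m' := by
    rcases Nat.eq_zero_or_pos m' with h | h
    · subst h; simp at hm'; omega
    · exact h
  haveI : NeZero m' := ⟨by omega⟩
  -- coprimality of b with g and with m'
  have hcop : IsCoprime b (m : ℤ) := Int.isCoprime_iff_gcd_eq_one.mpr hb
  have hmz : (m : ℤ) = (g : ℤ) * (m' : ℤ) := by exact_mod_cast congrArg (Nat.cast : ℕ → ℤ) hm'
  have hcopg : IsCoprime b (g : ℤ) := by
    have := hcop; rw [hmz] at this; exact this.of_mul_right_left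
  have hcopm' : IsCoprime b (m' : ℤ) := by
    have := hcop; rw [hmz] at this; exact this.of_mul_right_right
  -- induction hypothesis at modulus g
  obtain ⟨n₀, hn₀₁, hn₀₂, hn₀₃⟩ := IH g hgm hg (Int.isCoprime_iff_gcd_eq_one.mp hcopg) (max N i)
  have hin₀ : i ≤ n₀ := le_trans (le_max_right N i) (le_of_lt hn₀₁)
  -- the divisibility by g
  have hdvdg : (g : ℤ) ∣ (r - (a ^ n₀ + b * n₀)) := by
    rw [← ZMod.intCast_zmod_eq_zero_iff_dvd]
    push_cast
    rw [← hn₀₃]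
    push_cast
    ring
  obtain ⟨c', hc'⟩ := hdvdg
  -- units in ZMod m'
  have hubm : IsUnit ((b : ℤ) : ZMod m') := by
    obtain ⟨u, v, huv⟩ := hcopm'
    refine IsUnit.of_mul_eq_one ((u : ℤ) : ZMod m') ?_
    have : ((u * b + v * m' : ℤ) : ZMod m') = ((1 : ℤ) : ZMod m') := by rw [huv]
    push_cast at this
    simp [ZMod.natCast_self] at this
    rw [mul_comm]
    simpa using this
  have hcoptm : Nat.Coprime t' m' := by
    have := Nat.coprime_div_gcd_div_gcd (m := t) (n := m) hg
    have e1 : t / g = t' := by rw [ht']; exact Nat.mul_div_cancel_left _ hg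
    have e2 : m / g = m' := by rw [hm']; exact Nat.mul_div_cancel_left _ hg
    rwa [← hgdef, e1, e2] at this
  have hut : IsUnit ((t' : ℕ) : ZMod m') := (ZMod.isUnit_iff_coprime t' m').mpr hcoptm
  set u : ZMod m' := ((b : ℤ) : ZMod m') * ((t' : ℕ) : ZMod m') with hudef
  have hu : IsUnit u := hubm.mul hut
  set k : ℕ := (u⁻¹ * ((c' : ℤ) : ZMod m')).val with hkdef
  have hklt : k < m' := ZMod.val_lt _
  have hkeq : ((k : ℕ) : ZMod m') = u⁻¹ * ((c' : ℤ) : ZMod m') := by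
    rw [hkdef]; simp [ZMod.natCast_val, ZMod.cast_id]
  -- solve the congruence in ZMod m'
  have h5 : ((b * (t' : ℤ) * (k : ℤ) - c' : ℤ) : ZMod m') = 0 := by
    push_cast
    rw [hkeq]
    have : ((b : ℤ) : ZMod m') * ((t' : ℕ) : ZMod m') * (u⁻¹ * ((c' : ℤ) : ZMod m'))
        = (u * u⁻¹) * ((c' : ℤ) : ZMod m') := by rw [hudef]; ring
    push_cast at this ⊢
    rw [this, ZMod.mul_inv_of_unit u hu, one_mul]
    ring
  have hdvdm' : (m' : ℤ) ∣ (b * (t' : ℤ) * (k : ℤ) - c') :=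
    (ZMod.intCast_zmod_eq_zero_iff_dvd _ _).mp h5
  have hdvdm : (m : ℤ) ∣ (b * (t : ℤ) * (k : ℤ) - (r - (a ^ n₀ + b * n₀))) := by
    rw [hc', hmz]
    have : b * (t : ℤ) * (k : ℤ) - (g : ℤ) * c'
        = (g : ℤ) * (b * (t' : ℤ) * (k : ℤ) - c') := by
      have htz : (t : ℤ) = (g : ℤ) * (t' : ℤ) := by exact_mod_cast congrArg (Nat.cast : ℕ → ℤ) ht'
      rw [htz]; ring
    rw [this]
    exact mul_dvd_mul_left _ hdvdm'
  -- periodicity iterate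
  have hiter : ∀ (j n : ℕ), i ≤ n → ((a : ZMod m)) ^ (n + j * t) = (a : ZMod m) ^ n := by
    intro j
    induction j with
    | zero => simp
    | succ j ih =>
      intro n hn
      have e : n + (j + 1) * t = (n + j * t) + t := by ring
      rw [e, hper _ (le_trans hn (Nat.le_add_right _ _)), ih n hn]
  refine ⟨n₀ + k * t, by omega, ?_, ?_⟩
  · -- size bound
    have hb1 : n₀ ≤ N + i + g * g := by
      have h2 : max N i ≤ N + i := max_le (Nat.le_add_right N i) (Nat.le_add_left i N)
      have : g ^ 2 = g * g := sq g
      omega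
    have hb3 : k + 1 ≤ m' := hklt
    have hb5 : g + m' ≤ m + 1 := by
      have h1 : (g - 1) * (m' - 1) ≥ 0 := Nat.zero_le _
      have h2 : g * m' = m := hm'.symm
      nlinarith [hg, hm'pos]
    have hbB : g * g ≤ g * t := Nat.mul_le_mul_left g hgt
    have hbC : k * t + t ≤ m' * t := by
      calc k * t + t = (k + 1) * t := by ring
        _ ≤ m' * t := Nat.mul_le_mul_right t hb3
    have hbD : g * t + m' * t ≤ m * t + t := by
      calc g * t + m' * t = (g + m') * t := by ring
        _ ≤ (m + 1) * t := Nat.mul_le_mul_right t hb5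
        _ = m * t + t := by ring
    have hbE : m * t + m ≤ m * m := by
      calc m * t + m = m * (t + 1) := by ring
        _ ≤ m * m := Nat.mul_le_mul_left m (by omega)
    have hbF : i + t ≤ m := hitm
    have hgoal : n₀ + k * t ≤ N + m * m := by linarith [ht]
    have : m ^ 2 = m * m := sq m
    omega
  · -- the congruence
    push_cast
    rw [hiter k n₀ hin₀]
    have h6 : ((b * (t : ℤ) * (k : ℤ) - (r - (a ^ n₀ + b * n₀)) : ℤ) : ZMod m) = 0 :=
      (ZMod.intCast_zmod_eq_zero_iff_dvd _ _).mpr hdvdm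
    push_cast at h6
    linear_combination h6

theorem stmt_0 (a b : ℤ) (m : ℕ) (hm : 0 < m) (hb : Int.gcd b m = 1) (r : ℤ) :
    ∃ n : ℕ, 1 ≤ n ∧ n ≤ m ^ 2 ∧ a ^ n + b * n ≡ r [ZMOD m] := by
  obtain ⟨n, h1, h2, h3⟩ := key a b r m hm hb 0
  exact ⟨n, h1, by omega, (ZMod.intCast_eq_intCast_iff _ _ _).mp h3⟩
end

section
/- Let a, b be integers and m a positive integer with gcd(a·b, m) = 1. Then for every integer r there exists a positive integer n ≤ m² such that a^n + b·n ≡ r (mod m). -/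
theorem stmt_1_aux (a b : ℤ) : ∀ m : ℕ, 0 < m → Int.gcd (a * b) m = 1 → ∀ r : ℤ,
    ∃ n : ℕ, 1 ≤ n ∧ n ≤ m ^ 2 ∧ ((a ^ n + b * n : ℤ) : ZMod m) = (r : ZMod m) := by
  intro m
  induction m using Nat.strong_induction_on with
  | _ m ih =>
    intro hm hcop r
    rcases eq_or_lt_of_le (show 1 ≤ m from hm) with hm1 | hm1
    · refine ⟨1, le_rfl, by nlinarith, ?_⟩
      have : m = 1 := hm1.symm
      subst this
      exact Subsingleton.elim _ _
    -- now 1 < m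
    haveI : NeZero m := ⟨by omega⟩
    have hab' : IsCoprime (a * b) (m : ℤ) := Int.isCoprime_iff_gcd_eq_one.mpr hcop
    have ha : IsCoprime a (m : ℤ) := hab'.of_mul_left_left
    have hb : IsCoprime b (m : ℤ) := hab'.of_mul_left_right
    have hAunit : IsUnit ((a : ZMod m)) := by
      obtain ⟨u, v, huv⟩ := ha
      refine IsUnit.of_mul_eq_one ((u : ℤ) : ZMod m) ?_
      have h := congrArg (fun z : ℤ => ((z : ZMod m))) huv
      push_cast at h
      rw [ZMod.natCast_self] at h
      rw [mul_comm]
      linear_combination h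
    set lam := orderOf ((a : ZMod m)) with hlam_def
    have hlam_dvd : lam ∣ Nat.totient m := by
      rw [hlam_def, ← hAunit.unit_spec, orderOf_units]
      exact orderOf_dvd_of_pow_eq_one (ZMod.pow_totient hAunit.unit)
    have hlam_pos : 0 < lam := by
      rw [hlam_def, ← hAunit.unit_spec, orderOf_units]
      exact orderOf_pos _
    have hlam_le : lam ≤ m :=
      le_trans (Nat.le_of_dvd (Nat.totient_pos.mpr hm) hlam_dvd) (Nat.totient_le m)
    have hlam_lt : lam < m :=
      lt_of_le_of_lt (Nat.le_of_dvd (Nat.totient_pos.mpr hm) hlam_dvd) (Nat.totient_lt m hm1)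
    have halam : ((a : ZMod m)) ^ lam = 1 := pow_orderOf_eq_one _
    set g := Nat.gcd lam m with hg_def
    have hg_pos : 0 < g := Nat.gcd_pos_of_pos_left _ hlam_pos
    have hg_lt : m / 1 = m := Nat.div_one m
    have hg_lt' : g < m := lt_of_le_of_lt (Nat.gcd_le_left _ hlam_pos) hlam_lt
    have hg_dvd_m : g ∣ m := Nat.gcd_dvd_right _ _
    have hg_dvd_lam : g ∣ lam := Nat.gcd_dvd_left _ _
    have hcop_g : Int.gcd (a * b) g = 1 := by
      have h1 : ((Int.gcd (a * b) g : ℕ) : ℤ) ∣ ((Int.gcd (a * b) m : ℕ) : ℤ) := by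
        apply Int.dvd_coe_gcd (Int.gcd_dvd_left _ _)
        exact dvd_trans (Int.gcd_dvd_right _ _) (by exact_mod_cast Int.natCast_dvd_natCast.mpr hg_dvd_m)
      rw [hcop] at h1
      exact Nat.dvd_one.mp (by exact_mod_cast h1)
    obtain ⟨y, hy1, hy2, hy3⟩ := ih g hg_lt' hg_pos hcop_g r
    have hc : (g : ℤ) ∣ (r - (a ^ y + b * y)) := by
      have := (ZMod.intCast_eq_intCast_iff _ _ _).1 hy3
      exact this.dvd
    set c : ℤ := r - (a ^ y + b * y) with hc_def
    set G := Int.gcd (b * lam) m with hG_def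
    have hGm : ((G : ℕ) : ℤ) ∣ (m : ℤ) := Int.gcd_dvd_right _ _
    have hG_dvd_c : ((G : ℕ) : ℤ) ∣ c := by
      have h2 : IsCoprime b ((G : ℕ) : ℤ) := hb.of_isCoprime_of_dvd_right hGm
      have h3 : ((G : ℕ) : ℤ) ∣ b * lam := Int.gcd_dvd_left _ _
      have h4 : ((G : ℕ) : ℤ) ∣ (lam : ℤ) := h2.symm.dvd_of_dvd_mul_left h3
      have h5 : G ∣ g := Nat.dvd_gcd (by exact_mod_cast h4) (by exact_mod_cast hGm)
      exact dvd_trans (by exact_mod_cast Int.natCast_dvd_natCast.mpr h5) hc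
    have hGpos : (0 : ℤ) < G := by
      have : G ≠ 0 := by
        intro h
        have := Int.gcd_eq_zero_iff.mp h
        have hm0 : (m : ℤ) = 0 := this.2
        simp at hm0
        omega
      exact_mod_cast Nat.pos_of_ne_zero this
    have hbez : ((G : ℕ) : ℤ) = (b * lam) * Int.gcdA (b * lam) m + m * Int.gcdB (b * lam) m :=
      Int.gcd_eq_gcd_ab _ _
    set t : ℤ := c / G * Int.gcdA (b * lam) m with ht_def
    have hcc : ((G : ℕ) : ℤ) * (c / G) = c := Int.mul_ediv_cancel' hG_dvd_c
    have ht : (m : ℤ) ∣ (b * lam * t - c) := by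
      refine ⟨-(Int.gcdB (b * lam) m * (c / G)), ?_⟩
      rw [ht_def]
      linear_combination hcc - (c / G) * hbez
    set t₀ : ℕ := (t % m).toNat with ht₀_def
    have ht0 : ((t₀ : ℕ) : ℤ) = t % m :=
      Int.toNat_of_nonneg (Int.emod_nonneg t (by exact_mod_cast hm.ne'))
    have h6 : (m : ℤ) ∣ ((t₀ : ℤ) - t) := ⟨-(t / m), by rw [ht0, Int.emod_def]; ring⟩
    have ht0m : (m : ℤ) ∣ (b * lam * t₀ - c) := by
      have heq : b * lam * (t₀ : ℤ) - c = (b * lam * t - c) + (b * lam) * ((t₀ : ℤ) - t) := by ring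
      rw [heq]
      exact dvd_add ht (h6.mul_left _)
    set n0 : ℕ := y + lam * t₀ with hn0_def
    set L : ℕ := Nat.lcm lam m with hL_def
    have hL_pos : 0 < L := Nat.pos_of_ne_zero (Nat.lcm_ne_zero hlam_pos.ne' hm.ne')
    have hlamL : lam ∣ L := Nat.dvd_lcm_left _ _
    have hmL : m ∣ L := Nat.dvd_lcm_right _ _
    have hL_le : L ≤ m ^ 2 := by
      have h1 : L ∣ lam * m := Nat.lcm_dvd (dvd_mul_right _ _) (dvd_mul_left _ _)
      have h2 : L ≤ lam * m := Nat.le_of_dvd (Nat.mul_pos hlam_pos hm) h1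
      calc L ≤ lam * m := h2
        _ ≤ m * m := Nat.mul_le_mul_right _ hlam_le
        _ = m ^ 2 := (sq m).symm
    set n : ℕ := (n0 - 1) % L + 1 with hn_def
    have hn1 : 1 ≤ n := Nat.le_add_left 1 _
    have hmod : (n0 - 1) % L < L := Nat.mod_lt _ hL_pos
    have hn_le : n ≤ m ^ 2 := le_trans (by omega) hL_le
    have hn0_pos : 1 ≤ n0 := le_trans hy1 (Nat.le_add_right _ _)
    have hn0_eq : n0 = n + L * ((n0 - 1) / L) := by
      have := Nat.div_add_mod (n0 - 1) L
      omega
    clear_value n n0 L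
    refine ⟨n, hn1, hn_le, ?_⟩
    -- a^L = 1
    have haL : ((a : ZMod m)) ^ L = 1 := by
      obtain ⟨e, he⟩ := hlamL
      rw [he, pow_mul, halam, one_pow]
    have h_an : ((a : ZMod m)) ^ n0 = ((a : ZMod m)) ^ n := by
      rw [hn0_eq, pow_add, pow_mul, haL, one_pow, mul_one]
    have h_bn : ((n0 : ℕ) : ZMod m) = ((n : ℕ) : ZMod m) := by
      rw [hn0_eq]
      push_cast
      obtain ⟨e, he⟩ := hmL
      have : ((L : ℕ) : ZMod m) = 0 := by
        rw [he]; push_cast; rw [ZMod.natCast_self]; ring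
      rw [this]; ring
    have e1 : ((b * lam * t₀ - c : ℤ) : ZMod m) = 0 := by
      rw [ZMod.intCast_zmod_eq_zero_iff_dvd]; exact ht0m
    rw [hc_def] at e1
    push_cast at e1
    have hmain : ((a : ZMod m)) ^ n0 + (b : ZMod m) * ((n0 : ℕ) : ZMod m) = (r : ZMod m) := by
      have h7 : ((a : ZMod m)) ^ n0 = ((a : ZMod m)) ^ y := by
        rw [hn0_def, pow_add, pow_mul, halam, one_pow, mul_one]
      rw [h7, hn0_def]
      push_cast
      linear_combination e1
    push_cast
    rw [← h_an, ← h_bn]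
    exact hmain

theorem stmt_1 (a b : ℤ) (m : ℕ) (hm : 0 < m) (hab : Int.gcd (a * b) m = 1) (r : ℤ) :
    ∃ n : ℕ, 1 ≤ n ∧ n ≤ m ^ 2 ∧ a ^ n + b * n ≡ r [ZMOD m] := by
  obtain ⟨n, h1, h2, h3⟩ := stmt_1_aux a b m hm hab r
  exact ⟨n, h1, h2, (ZMod.intCast_eq_intCast_iff _ _ _).1 h3⟩
end

section
/- For any positive integer m and any integer b coprime to m and any integer a, the map sending n to (a^n + b·n) mod m, restricted to n ∈ {1, ..., m²}, is surjective onto Z/mZ. -/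
/-- Solve a linear congruence `A*k ≡ B (mod M)` with `k` a natural number `< M`. -/
lemma aux_solve_lin (A B M : ℤ) (hM : 0 < M) (h : (Int.gcd A M : ℤ) ∣ B) :
    ∃ k : ℕ, (k : ℤ) < M ∧ M ∣ A * k - B := by
  obtain ⟨s, hs⟩ := h
  set z := A.gcdA M * s with hz
  refine ⟨(z % M).toNat, ?_, ?_⟩
  · have h1 : 0 ≤ z % M := Int.emod_nonneg z hM.ne'
    have h2 : z % M < M := Int.emod_lt_of_pos z hM
    omega
  · have h1 : 0 ≤ z % M := Int.emod_nonneg z hM.ne'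
    have hcast : ((z % M).toNat : ℤ) = z % M := Int.toNat_of_nonneg h1
    rw [hcast]
    have hdiv : M ∣ z % M - z := by
      have := Int.mul_ediv_add_emod z M
      exact ⟨-(z / M), by linarith⟩
    have h2 : M ∣ A * (z % M) - A * z := by
      obtain ⟨u, hu⟩ := hdiv
      exact ⟨A * u, by rw [← mul_sub, hu]; ring⟩
    have h3 : M ∣ A * z - B := by
      have hbez := Int.gcd_eq_gcd_ab A M
      refine ⟨-(A.gcdB M * s), ?_⟩
      rw [hz, hs]
      calc A * (A.gcdA M * s) - ↑(A.gcd M) * s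
          = (A * A.gcdA M - ↑(A.gcd M)) * s := by ring
        _ = (-(M * A.gcdB M)) * s := by rw [hbez]; ring
        _ = M * -(A.gcdB M * s) := by ring
    have := dvd_add h2 h3
    simpa using this

/-- eventual periodicity of powers: one step -/
lemma aux_pow_step (a M : ℤ) (i t : ℕ) (h : a ^ (i + t) ≡ a ^ i [ZMOD M]) :
    ∀ x, i ≤ x → a ^ (x + t) ≡ a ^ x [ZMOD M] := by
  intro x hx
  obtain ⟨u, rfl⟩ := Nat.exists_eq_add_of_le hx
  have h1 : a ^ (i + u + t) = a ^ (i + t) * a ^ u := by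
    rw [← pow_add]; ring_nf
  have h2 : a ^ (i + u) = a ^ i * a ^ u := by rw [← pow_add]
  rw [h1, h2]
  exact h.mul_right _

lemma aux_pow_per (a M : ℤ) (i t : ℕ) (h : a ^ (i + t) ≡ a ^ i [ZMOD M]) :
    ∀ s x, i ≤ x → a ^ (x + t * s) ≡ a ^ x [ZMOD M] := by
  intro s
  induction s with
  | zero => intro x _; simp
  | succ s ih =>
    intro x hx
    have e : x + t * (s + 1) = (x + t * s) + t := by ring
    rw [e]
    exact (aux_pow_step a M i t h (x + t * s) (by omega)).trans (ih x hx)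

/-- two indices `≥ i` congruent mod `t` give congruent powers -/
lemma aux_pow_congr (a M : ℤ) (i t : ℕ) (h : a ^ (i + t) ≡ a ^ i [ZMOD M])
    (x y : ℕ) (hx : i ≤ x) (hy : i ≤ y) (hxy : x ≡ y [MOD t]) :
    a ^ x ≡ a ^ y [ZMOD M] := by
  rcases le_total x y with hle | hle
  · obtain ⟨u, hu⟩ := (Nat.modEq_iff_dvd' hle).mp hxy
    have e : y = x + t * u := by omega
    rw [e]
    exact (aux_pow_per a M i t h u x hx).symm
  · obtain ⟨u, hu⟩ := (Nat.modEq_iff_dvd' hle).mp hxy.symm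
    have e : x = y + t * u := by omega
    rw [e]
    exact aux_pow_per a M i t h u y hy

/-- pigeonhole: a collision of powers with period at most `m - 1` -/
lemma aux_collision (a : ℤ) (m : ℕ) (hm : 2 ≤ m) :
    ∃ i t : ℕ, 0 < t ∧ t + 1 ≤ m ∧ i + t ≤ m ∧
      (a : ℤ) ^ (i + t) ≡ a ^ i [ZMOD (m : ℤ)] := by
  haveI : NeZero m := ⟨by omega⟩
  haveI : Fact (1 < m) := ⟨by omega⟩
  have hcard : Fintype.card (ZMod m) = m := ZMod.card m
  have key : ∀ i j : ℕ, (a : ZMod m) ^ i = (a : ZMod m) ^ j →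
      (a : ℤ) ^ i ≡ a ^ j [ZMOD (m : ℤ)] := by
    intro i j hij
    rw [← ZMod.intCast_eq_intCast_iff]
    push_cast
    exact hij
  obtain ⟨x, y, hxy, hf⟩ := Fintype.exists_ne_map_eq_of_card_lt
    (fun k : Fin (m + 1) => (a : ZMod m) ^ (k : ℕ)) (by simp [hcard])
  have hne : (x : ℕ) ≠ (y : ℕ) := fun h => hxy (Fin.ext h)
  obtain ⟨i, j, hij, hjm, hpow⟩ :
      ∃ i j : ℕ, i < j ∧ j ≤ m ∧ (a : ZMod m) ^ i = (a : ZMod m) ^ j := by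
    rcases Nat.lt_or_ge (x : ℕ) (y : ℕ) with h | h
    · exact ⟨x, y, h, by have := y.isLt; omega, hf⟩
    · exact ⟨y, x, by omega, by have := x.isLt; omega, hf.symm⟩
  by_cases hsmall : j - i + 1 ≤ m
  · refine ⟨i, j - i, by omega, hsmall, by omega, ?_⟩
    have e : i + (j - i) = j := by omega
    rw [e]
    exact (key _ _ hpow).symm
  · -- then i = 0, j = m, so a^m = 1 in ZMod m and a is a unit
    have hi : i = 0 := by omega
    have hj : j = m := by omega
    have hone : (a : ZMod m) ^ m = 1 := by
      have := hpow; rw [hi, hj] at this; simpa using this.symm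
    have hunit : IsUnit (a : ZMod m) := by
      refine IsUnit.of_mul_eq_one ((a : ZMod m) ^ (m - 1)) ?_
      rw [← pow_succ']
      have e : m - 1 + 1 = m := by omega
      rw [e, hone]
    have hnz : ∀ k : ℕ, ¬ ((a : ZMod m) ^ k = 0) := fun k => (hunit.pow k).ne_zero
    have hcard2 : Fintype.card {z : ZMod m // ¬ z = 0} < Fintype.card (Fin m) := by
      rw [Fintype.card_subtype_compl, Fintype.card_subtype_eq, hcard, Fintype.card_fin]
      omega
    obtain ⟨u, v, huv, hg⟩ := Fintype.exists_ne_map_eq_of_card_lt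
      (fun k : Fin m => (⟨(a : ZMod m) ^ (k : ℕ), hnz _⟩ : {z : ZMod m // ¬ z = 0}))
      hcard2
    have hg' : (a : ZMod m) ^ (u : ℕ) = (a : ZMod m) ^ (v : ℕ) :=
      congrArg Subtype.val hg
    have hne2 : (u : ℕ) ≠ (v : ℕ) := fun h => huv (Fin.ext h)
    rcases Nat.lt_or_ge (u : ℕ) (v : ℕ) with h | h
    · refine ⟨u, (v : ℕ) - u, by omega, by have := v.isLt; omega,
        by have := v.isLt; omega, ?_⟩
      have e : (u : ℕ) + ((v : ℕ) - u) = v := by omega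
      rw [e]
      exact key _ _ hg'.symm
    · refine ⟨v, (u : ℕ) - v, by omega, by have := u.isLt; omega,
        by have := u.isLt; omega, ?_⟩
      have e : (v : ℕ) + ((u : ℕ) - v) = u := by omega
      rw [e]
      exact key _ _ hg'

/-- Main lemma by strong induction on the modulus. -/
lemma aux_key : ∀ m : ℕ, 0 < m → ∀ a b r : ℤ, Int.gcd b m = 1 → ∀ N : ℕ,
    ∃ n : ℕ, N ≤ n ∧ n < max N 1 + m ^ 2 ∧ a ^ n + b * n ≡ r [ZMOD (m : ℤ)] := by
  intro m
  induction m using Nat.strong_induction_on with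
  | _ m IH =>
    intro hm a b r hb N
    rcases Nat.lt_or_ge m 2 with hm1 | hm2
    · -- m = 1
      have : m = 1 := by omega
      subst this
      refine ⟨max N 1, le_max_left _ _, by omega, ?_⟩
      have e : ((1 : ℕ) : ℤ) = 1 := by norm_num
      rw [e]
      exact Int.modEq_one
    · -- m ≥ 2
      obtain ⟨i, t, ht0, htm, hitm, hper⟩ := aux_collision a m hm2
      set d := Nat.gcd t m with hd
      have hd0 : 0 < d := Nat.gcd_pos_of_pos_right _ (by omega)
      have hdt : d ∣ t := Nat.gcd_dvd_left _ _
      have hdm : d ∣ m := Nat.gcd_dvd_right _ _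
      have hdlt : d < m := by
        have : d ≤ t := Nat.le_of_dvd ht0 hdt
        omega
      have hb' : Nat.Coprime b.natAbs m := by
        simpa [Int.gcd] using hb
      have hbd : Int.gcd b (d : ℕ) = 1 := by
        have h2 : Nat.gcd b.natAbs d ∣ Nat.gcd b.natAbs m :=
          Nat.gcd_dvd_gcd_of_dvd_right _ hdm
        rw [hb'] at h2
        have h3 : Nat.gcd b.natAbs d = 1 := Nat.dvd_one.mp h2
        simpa [Int.gcd] using h3
      -- apply IH at modulus d, with start N' = i
      obtain ⟨n2, hn2i, _, hn2mod⟩ := IH d hdlt hd0 a b r hbd i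
      -- choose c in the window [c0, c0 + t) with c ≡ n2 (mod t)
      set c0 := max (max N i) 1 with hc0
      set X := n2 + t * c0 with hX
      have hXc0 : c0 ≤ X := by
        have : c0 ≤ t * c0 := Nat.le_mul_of_pos_left _ ht0
        omega
      set c := c0 + (X - c0) % t with hc
      have hcc0 : c0 ≤ c := by omega
      have hclt : c + 1 ≤ c0 + t := by
        have := Nat.mod_lt (X - c0) ht0
        omega
      have hcX : c ≡ X [MOD t] := by
        have h1 : (X - c0) % t ≡ X - c0 [MOD t] := Nat.mod_modEq _ _
        calc c = c0 + (X - c0) % t := hc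
          _ ≡ c0 + (X - c0) [MOD t] := Nat.ModEq.add_left _ h1
          _ = X := by omega
      have hcn2 : c ≡ n2 [MOD t] := by
        calc c ≡ X [MOD t] := hcX
          _ = n2 + t * c0 := hX
          _ ≡ n2 + 0 [MOD t] :=
              Nat.ModEq.add_left _ ((Nat.modEq_zero_iff_dvd).mpr ⟨c0, rfl⟩)
          _ = n2 := by omega
      have hci : i ≤ c := by omega
      -- a^c ≡ a^{n2} (mod m), hence mod d
      have hpowc : (a : ℤ) ^ c ≡ a ^ n2 [ZMOD (m : ℤ)] :=
        aux_pow_congr a m i t hper c n2 hci hn2i hcn2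
      have hdmz : ((d : ℕ) : ℤ) ∣ ((m : ℕ) : ℤ) := Int.natCast_dvd_natCast.mpr hdm
      have hpowcd : (a : ℤ) ^ c ≡ a ^ n2 [ZMOD (d : ℤ)] := hpowc.of_dvd hdmz
      have hcn2d : ((c : ℕ) : ℤ) ≡ ((n2 : ℕ) : ℤ) [ZMOD ((d : ℕ) : ℤ)] := by
        have h1 : c % d = n2 % d := Nat.ModEq.of_dvd hdt hcn2
        show ((c : ℕ) : ℤ) % ((d : ℕ) : ℤ) = ((n2 : ℕ) : ℤ) % ((d : ℕ) : ℤ)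
        rw [← Int.natCast_mod, ← Int.natCast_mod, h1]
      have hfcd : a ^ c + b * c ≡ r [ZMOD ((d : ℕ) : ℤ)] :=
        (hpowcd.add (hcn2d.mul_left b)).trans hn2mod
      -- solve for k : b*t*k ≡ r - (a^c + b*c) (mod m)
      have hgcd : Int.gcd (b * (t : ℤ)) ((m : ℕ) : ℤ) = d := by
        unfold Int.gcd
        rw [Int.natAbs_mul]
        simp only [Int.natAbs_natCast]
        exact Nat.Coprime.gcd_mul_left_cancel t hb'
      have hdvdB : ((Int.gcd (b * (t : ℤ)) ((m : ℕ) : ℤ) : ℕ) : ℤ) ∣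
          (r - (a ^ c + b * c)) := by
        rw [hgcd]
        exact hfcd.dvd
      obtain ⟨k, hkm, hksol⟩ := aux_solve_lin (b * t) (r - (a ^ c + b * c)) m
        (by exact_mod_cast hm) hdvdB
      have hkm' : k < m := by exact_mod_cast hkm
      refine ⟨c + t * k, by omega, ?_, ?_⟩
      · -- bound: c + t*k < max N 1 + m^2
        have e1 : t * k + t ≤ t * m := by
          calc t * k + t = t * (k + 1) := by ring
            _ ≤ t * m := Nat.mul_le_mul_left _ (by omega)
        have esq : m ^ 2 = m * m := sq m
        rcases le_or_gt i N with hiN | hiN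
        · have hc0N : c0 = max N 1 := by rw [hc0]; omega
          have e2 : t * m + m ≤ m * m := by
            calc t * m + m = (t + 1) * m := by ring
              _ ≤ m * m := Nat.mul_le_mul_right m htm
          rw [esq, ← hc0N]
          linarith [hclt, e1, e2]
        · have hc0i : c0 = i := by rw [hc0]; omega
          have e3 : i * m + t * m ≤ m * m := by
            calc i * m + t * m = (i + t) * m := by ring
              _ ≤ m * m := Nat.mul_le_mul_right m hitm
          have e4 : i ≤ i * m := Nat.le_mul_of_pos_right i (by omega)
          have e5 : (1 : ℕ) ≤ max N 1 := le_max_right _ _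
          rw [esq]
          have hmm : 2 ≤ m * m := by nlinarith
          linarith [hclt, e1, e3, e4, e5, hmm]
      · -- congruence
        have hpow : (a : ℤ) ^ (c + t * k) ≡ a ^ c [ZMOD ((m : ℕ) : ℤ)] :=
          aux_pow_per a m i t hper k c hci
        have hlin : b * (t : ℤ) * k ≡ r - (a ^ c + b * c) [ZMOD ((m : ℕ) : ℤ)] := by
          rw [Int.modEq_iff_dvd]
          have h := (dvd_neg.mpr hksol)
          simpa [neg_sub] using h
        have hcast : (((c + t * k : ℕ)) : ℤ) = (c : ℤ) + (t : ℤ) * k := by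
          push_cast; ring
        calc a ^ (c + t * k) + b * ((c + t * k : ℕ) : ℤ)
            = a ^ (c + t * k) + (b * c + b * (t : ℤ) * k) := by rw [hcast]; ring
          _ ≡ a ^ c + (b * c + b * (t : ℤ) * k) [ZMOD ((m : ℕ) : ℤ)] :=
              hpow.add_right _
          _ ≡ a ^ c + (b * c + (r - (a ^ c + b * c))) [ZMOD ((m : ℕ) : ℤ)] :=
              (hlin.add_left _).add_left _
          _ = r := by ring

theorem stmt_8 (a b : ℤ) (m : ℕ) (hm : 0 < m) (hb : Int.gcd b m = 1) :
    ∀ r : ZMod m, ∃ n : ℕ, 1 ≤ n ∧ n ≤ m ^ 2 ∧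
      (a : ZMod m) ^ n + (b : ZMod m) * (n : ZMod m) = r := by
  intro r
  obtain ⟨r', rfl⟩ := ZMod.intCast_surjective r
  obtain ⟨n, h1, h2, h3⟩ := aux_key m hm a b r' hb 1
  refine ⟨n, h1, by have : 1 ≤ m ^ 2 := Nat.one_le_pow _ _ hm; omega, ?_⟩
  have := (ZMod.intCast_eq_intCast_iff _ _ _).mpr h3
  push_cast at this
  exact this
end
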